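/- If enc: Σ → Γ^k encodes each letter as a word of the same length k ≥ 1 (with all codewords distinct), then η(enc(L)) = η(L)/k for every language L ⊆ Σ*, with the convention ∞/k = ∞. -/

import Mathlib

open Filter

/-- The `n`-th Myhill–Nerode approximation: `u ~ v` iff all witnesses of length at most `n`
agree. -/
def thetaN {α : Type*} (L : Set (List α)) (n : ℕ) (u v : List α) : Prop :=
  ∀ w : List α, w.length ≤ n → ((u ++ w) ∈ L ↔ (v ++ w) ∈ L)

/-- The index (number of classes) of `thetaN L n`. -/
noncomputable def indexN {α : Type*} (L : Set (List α)) (n : ℕ) : ℕ :=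
  Nat.card (Quot (thetaN L n))

/-- Topological entropy of a language, with values in `[0,∞]`. -/
noncomputable def entropy {α : Type*} (L : Set (List α)) : ENNReal :=
  Filter.limsup (fun n : ℕ => ENNReal.ofReal (Real.logb 2 (indexN L n) / n)) Filter.atTop

/-- Homomorphic extension of a letter-encoding to words. -/
def encWord {α β : Type*} (enc : α → List β) (u : List α) : List β :=
  (u.map enc).flatten

section Aux

variable {α β : Type*} {enc : α → List β} {k : ℕ}


variable {α β : Type*} {enc : α → List β} {k : ℕ}

theorem encWord_nil : encWord enc [] = [] := rfl

theorem encWord_cons (a : α) (u : List α) :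
    encWord enc (a :: u) = enc a ++ encWord enc u := by simp [encWord]

theorem encWord_append (u v : List α) :
    encWord enc (u ++ v) = encWord enc u ++ encWord enc v := by simp [encWord]

theorem encWord_length (hlen : ∀ a, (enc a).length = k) (u : List α) :
    (encWord enc u).length = u.length * k := by
  induction u with
  | nil => simp [encWord]
  | cons a u ih => simp [encWord_cons, hlen, ih] at *; ring

theorem encWord_injective (hlen : ∀ a, (enc a).length = k) (hk : 1 ≤ k)
    (hinj : Function.Injective enc) : Function.Injective (encWord enc) := by
  intro u
  induction u with
  | nil =>
    intro v h
    cases v with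
    | nil => rfl
    | cons b v =>
      exfalso
      have := congrArg List.length h
      simp [encWord_nil, encWord_length hlen] at this
      omega
  | cons a u ih =>
    intro v h
    cases v with
    | nil =>
      exfalso
      have := congrArg List.length h
      simp [encWord_nil, encWord_length hlen] at this
      omega
    | cons b v =>
      rw [encWord_cons, encWord_cons] at h
      have hab : enc a = enc b := by
        have h1 := congrArg (List.take k) h
        rwa [List.take_left' (hlen a), List.take_left' (hlen b)] at h1
      have hu : encWord enc u = encWord enc v := by
        have h2 := congrArg (List.drop k) h
        rwa [List.drop_left' (hlen a), List.drop_left' (hlen b)] at h2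
      rw [hinj hab, ih hu]

theorem encWord_take (hlen : ∀ a, (enc a).length = k) (z : List α) (q : ℕ) :
    (encWord enc z).take (q * k) = encWord enc (z.take q) := by
  induction z generalizing q with
  | nil => simp [encWord]
  | cons a z ih =>
    cases q with
    | zero => simp [encWord]
    | succ q =>
      rw [encWord_cons, Nat.succ_mul, Nat.add_comm, ← hlen a, List.take_append, hlen a,
        List.take_succ_cons, encWord_cons,
        List.take_of_length_le (by rw [hlen a]; omega), Nat.add_sub_cancel_left, ih]


theorem thetaN_equivalence {L : Set (List α)} {n : ℕ} : Equivalence (thetaN L n) where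
  refl _ _ _ := Iff.rfl
  symm h w hw := (h w hw).symm
  trans h1 h2 w hw := (h1 w hw).trans (h2 w hw)

/-- key decomposition: membership of `encWord x ++ v` in the encoded language. -/
theorem mem_encImage_iff (hlen : ∀ a, (enc a).length = k) (hk : 1 ≤ k)
    (hinj : Function.Injective enc) (L : Set (List α)) (x : List α) (v : List β) :
    encWord enc x ++ v ∈ encWord enc '' L ↔ ∃ y, encWord enc y = v ∧ x ++ y ∈ L := by
  constructor
  · rintro ⟨z, hzL, hz⟩
    have hlenz : z.length * k = x.length * k + v.length := by
      have := congrArg List.length hz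
      simpa [encWord_length hlen] using this
    have hxz : x.length ≤ z.length := by nlinarith
    have htake : z.take x.length = x := by
      apply encWord_injective hlen hk hinj
      rw [← encWord_take hlen, hz, ← encWord_length hlen x, List.take_left]
    refine ⟨z.drop x.length, ?_, ?_⟩
    · have : encWord enc (z.take x.length ++ z.drop x.length) = encWord enc x ++ v := by
        rw [List.take_append_drop, hz]
      rw [encWord_append, htake] at this
      exact List.append_cancel_left this
    · rw [← List.take_append_drop x.length z] at hzL; rwa [htake] at hzL
  · rintro ⟨y, hy, hxy⟩
    exact ⟨x ++ y, hxy, by rw [encWord_append, hy]⟩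

theorem mem_encImage_iff' (hlen : ∀ a, (enc a).length = k) (hk : 1 ≤ k)
    (hinj : Function.Injective enc) (L : Set (List α)) (x : List α) :
    encWord enc x ∈ encWord enc '' L ↔ x ∈ L := by
  constructor
  · intro h
    have := (mem_encImage_iff hlen hk hinj L x []).mp (by simpa using h)
    obtain ⟨y, hy, hxy⟩ := this
    have : y = [] := by
      have := congrArg List.length hy
      simp [encWord_length hlen] at this
      rcases this with h | h
      · exact h
      · omega
    simpa [this] using hxy
  · intro h; exact ⟨x, h, rfl⟩


theorem finite_quot_thetaN [Finite α] (L : Set (List α)) (n : ℕ) :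
    Finite (Quot (thetaN L n)) := by
  have hfin : Finite {w : List α // w.length ≤ n} := (List.finite_length_le α n).to_subtype
  let F : Quot (thetaN L n) → ({w : List α // w.length ≤ n} → Prop) :=
    Quot.lift (fun u w => (u ++ w.1) ∈ L) (by
      intro u v h
      funext w
      exact propext (h w.1 w.2))
  have hF : Function.Injective F := by
    intro c c'
    induction c using Quot.ind with | _ u =>
    induction c' using Quot.ind with | _ v =>
    intro h
    apply Quot.sound
    intro w hw
    exact iff_of_eq (congrFun h ⟨w, hw⟩)
  exact Finite.of_injective F hF

theorem one_le_indexN [Finite α] (L : Set (List α)) (n : ℕ) : 1 ≤ indexN L n := by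
  have := finite_quot_thetaN L n
  have : Nonempty (Quot (thetaN L n)) := ⟨Quot.mk _ []⟩
  exact Nat.one_le_iff_ne_zero.mpr (Nat.card_ne_zero.mpr ⟨this, finite_quot_thetaN L n⟩)

theorem indexN_le_indexN_enc [Finite α] [Finite β]
    (hlen : ∀ a, (enc a).length = k) (hk : 1 ≤ k) (hinj : Function.Injective enc)
    (L : Set (List α)) (n : ℕ) :
    indexN L n ≤ indexN (encWord enc '' L) (n * k) := by
  set M := encWord enc '' L with hM
  have key : ∀ u w : List α, u ++ w ∈ L ↔ encWord enc u ++ encWord enc w ∈ M := by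
    intro u w
    rw [← encWord_append, hM, mem_encImage_iff' hlen hk hinj]
  have hresp : ∀ u v, thetaN L n u v →
      thetaN M (n * k) (encWord enc u) (encWord enc v) := by
    intro u v h w hw
    -- decompose w
    rw [mem_encImage_iff hlen hk hinj, mem_encImage_iff hlen hk hinj]
    constructor <;> rintro ⟨y, hy, hmem⟩
    · refine ⟨y, hy, ?_⟩
      rw [← h y ?_]
      · exact hmem
      · have := congrArg List.length hy
        rw [encWord_length hlen] at this
        nlinarith
    · refine ⟨y, hy, ?_⟩
      rw [h y ?_]
      · exact hmem
      · have := congrArg List.length hy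
        rw [encWord_length hlen] at this
        nlinarith
  let F : Quot (thetaN L n) → Quot (thetaN M (n * k)) :=
    Quot.lift (fun u => Quot.mk _ (encWord enc u)) (fun u v h => Quot.sound (hresp u v h))
  have hF : Function.Injective F := by
    intro c c'
    induction c using Quot.ind with | _ u =>
    induction c' using Quot.ind with | _ v =>
    intro h
    have h2 : thetaN M (n * k) (encWord enc u) (encWord enc v) :=
      (thetaN_equivalence.eqvGen_iff).mp (Quot.eq.mp h)
    apply Quot.sound
    intro w hw
    rw [key u w, key v w]
    exact h2 (encWord enc w) (by rw [encWord_length hlen]; exact Nat.mul_le_mul_right k hw)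
  have := finite_quot_thetaN M (n * k)
  exact Nat.card_le_card_of_injective F hF

theorem alive_decomp (hlen : ∀ a, (enc a).length = k) (hk : 1 ≤ k)
    (L : Set (List α)) {u w : List β} (h : u ++ w ∈ encWord enc '' L) :
    ∃ (x : List α) (s : List β), s.length < k ∧ u = encWord enc x ++ s := by
  obtain ⟨z, hzL, hz⟩ := h
  refine ⟨z.take (u.length / k), u.drop (u.length / k * k), ?_, ?_⟩
  · simp only [List.length_drop]
    have h1 := Nat.div_add_mod' u.length k
    have h2 : u.length % k < k := Nat.mod_lt _ hk
    omega
  · have htk : u.take (u.length / k * k) = encWord enc (z.take (u.length / k)) := by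
      rw [← encWord_take hlen, hz, List.take_append_of_le_length (Nat.div_mul_le_self _ _)]
    rw [← htk, List.take_append_drop]

theorem theta_enc_of_theta (hlen : ∀ a, (enc a).length = k) (hk : 1 ≤ k)
    (hinj : Function.Injective enc) (L : Set (List α)) (n : ℕ) (s : List β)
    (hs : s.length < k) {x x' : List α} (h : thetaN L (n / k + 1) x x') :
    thetaN (encWord enc '' L) n (encWord enc x ++ s) (encWord enc x' ++ s) := by
  intro w hw
  rw [List.append_assoc, List.append_assoc,
    mem_encImage_iff hlen hk hinj, mem_encImage_iff hlen hk hinj]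
  have hy : ∀ y : List β → Prop, True := fun _ => trivial
  constructor <;> rintro ⟨y, hy, hmem⟩ <;> refine ⟨y, hy, ?_⟩ <;>
  · have hylen : y.length ≤ n / k + 1 := by
      have h1 := congrArg List.length hy
      rw [encWord_length hlen] at h1
      simp only [List.length_append] at h1
      have h2 : y.length ≤ (n + k) / k := by
        rw [Nat.le_div_iff_mul_le hk]
        omega
      rwa [Nat.add_div_right _ hk] at h2
    first
      | exact (h y hylen).mp hmem
      | exact (h y hylen).mpr hmem

theorem indexN_enc_le [Finite α] [Finite β]
    (hlen : ∀ a, (enc a).length = k) (hk : 1 ≤ k) (hinj : Function.Injective enc)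
    (L : Set (List α)) (n : ℕ) :
    indexN (encWord enc '' L) n ≤
      Nat.card {s : List β // s.length < k} * indexN L (n / k + 1) + 1 := by
  classical
  set M := encWord enc '' L with hM
  set m := n / k + 1 with hm
  have hfinS : Finite {s : List β // s.length < k} := (List.finite_length_lt β k).to_subtype
  have hfinQ := finite_quot_thetaN L m
  have hfinM := finite_quot_thetaN M n
  -- the surjection
  let Dead : List β → Prop := fun u => ¬ ∃ w : List β, w.length ≤ n ∧ u ++ w ∈ M
  let Φ : ({s : List β // s.length < k} × Quot (thetaN L m)) ⊕ Unit → Quot (thetaN M n) :=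
    fun p => match p with
    | .inl (s, c) => Quot.lift (fun x => Quot.mk _ (encWord enc x ++ s.1))
        (fun x x' h => Quot.sound (theta_enc_of_theta hlen hk hinj L n s.1 s.2 h)) c
    | .inr _ => if h : ∃ u, Dead u then Quot.mk _ h.choose else Quot.mk _ []
  have hsurj : Function.Surjective Φ := by
    intro c
    induction c using Quot.ind with | _ u =>
    by_cases halive : ∃ w : List β, w.length ≤ n ∧ u ++ w ∈ M
    · obtain ⟨w, hw, hmem⟩ := halive
      obtain ⟨x, s, hslt, hu⟩ := alive_decomp hlen hk L hmem
      exact ⟨.inl (⟨s, hslt⟩, Quot.mk _ x), by simp [Φ, hu]⟩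
    · refine ⟨.inr (), ?_⟩
      have hex : ∃ u, Dead u := ⟨u, halive⟩
      simp only [Φ, dif_pos hex]
      apply Quot.sound
      intro w hw
      have h1 : ¬ (hex.choose ++ w ∈ M) := fun hc => hex.choose_spec ⟨w, hw, hc⟩
      have h2 : ¬ (u ++ w ∈ M) := fun hc => halive ⟨w, hw, hc⟩
      simp [h1, h2]
  calc indexN M n ≤ Nat.card (({s : List β // s.length < k} × Quot (thetaN L m)) ⊕ Unit) :=
        Nat.card_le_card_of_surjective Φ hsurj
    _ = Nat.card {s : List β // s.length < k} * indexN L m + 1 := by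
        rw [Nat.card_sum, Nat.card_prod]; simp [indexN]

open Filter in
theorem limsup_comp_le {g : ℕ → ENNReal} {v : ℕ → ℕ} (hv : Tendsto v atTop atTop) :
    limsup (fun n => g (v n)) atTop ≤ limsup g atTop := by
  rw [limsup_eq, limsup_eq]
  exact sInf_le_sInf (fun a ha => hv.eventually ha)


open Filter in
theorem entropy_le_k_mul [Finite α] [Finite β]
    (hlen : ∀ a, (enc a).length = k) (hk : 1 ≤ k) (hinj : Function.Injective enc)
    (L : Set (List α)) :
    entropy L ≤ (k : ENNReal) * entropy (encWord enc '' L) := by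
  set M := encWord enc '' L with hM
  set g : ℕ → ENNReal := fun n => ENNReal.ofReal (Real.logb 2 (indexN M n) / n) with hg
  have hpt : ∀ᶠ n in atTop, ENNReal.ofReal (Real.logb 2 (indexN L n) / n)
      ≤ (k : ENNReal) * g (n * k) := by
    filter_upwards [eventually_ge_atTop 1] with n hn
    have h1 : (1 : ℝ) ≤ (indexN L n : ℝ) := by exact_mod_cast one_le_indexN L n
    have h2 : (1 : ℝ) ≤ (indexN M (n * k) : ℝ) := by exact_mod_cast one_le_indexN M (n * k)
    have hle : (indexN L n : ℝ) ≤ (indexN M (n * k) : ℝ) := by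
      exact_mod_cast indexN_le_indexN_enc hlen hk hinj L n
    have hlog : Real.logb 2 (indexN L n) ≤ Real.logb 2 (indexN M (n * k)) :=
      Real.logb_le_logb_of_le one_lt_two (by linarith) hle
    have harith : (k : ℝ) * (Real.logb 2 (indexN M (n * k)) / ((n * k : ℕ) : ℝ))
        = Real.logb 2 (indexN M (n * k)) / n := by
      have hn0 : (0:ℝ) < (n:ℝ) := by exact_mod_cast hn
      have hk0 : (0:ℝ) < (k:ℝ) := by exact_mod_cast hk
      push_cast
      field_simp
    rw [hg]
    rw [← ENNReal.ofReal_natCast k, ← ENNReal.ofReal_mul (by positivity), harith]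
    apply ENNReal.ofReal_le_ofReal
    have hn0 : (0:ℝ) < (n:ℝ) := by exact_mod_cast hn
    gcongr
  calc entropy L ≤ limsup (fun n => (k : ENNReal) * g (n * k)) atTop :=
        limsup_le_limsup hpt
    _ = (k : ENNReal) * limsup (fun n => g (n * k)) atTop :=
        ENNReal.limsup_const_mul_of_ne_top (ENNReal.natCast_ne_top k)
    _ ≤ (k : ENNReal) * limsup g atTop := by
        apply mul_le_mul_right
        apply limsup_comp_le
        apply tendsto_atTop_mono (fun n => Nat.le_mul_of_pos_right n hk) tendsto_id

open Filter Real in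
theorem k_mul_entropy_le [Finite α] [Finite β]
    (hlen : ∀ a, (enc a).length = k) (hk : 1 ≤ k) (hinj : Function.Injective enc)
    (L : Set (List α)) :
    (k : ENNReal) * entropy (encWord enc '' L) ≤ entropy L := by
  set M := encWord enc '' L with hM
  set C : ℕ := Nat.card {s : List β // s.length < k} with hC
  have hA : (0:ℝ) ≤ logb 2 (C + 1) := logb_nonneg one_lt_two (by exact_mod_cast Nat.le_add_left 1 C)
  set A : ℝ := logb 2 (C + 1) with hAdef
  -- uniform bound on the encoded index
  have hboundM : ∀ n : ℕ, logb 2 (indexN M n) ≤ A + logb 2 (indexN L (n / k + 1)) := by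
    intro n
    have h1 : (1 : ℝ) ≤ (indexN M n : ℝ) := by exact_mod_cast one_le_indexN M n
    have h2 : (1 : ℝ) ≤ (indexN L (n / k + 1) : ℝ) := by exact_mod_cast one_le_indexN L _
    have hle : (indexN M n : ℝ) ≤ ((C + 1) : ℝ) * (indexN L (n / k + 1) : ℝ) := by
      have := indexN_enc_le hlen hk hinj L n
      have h3 : indexN M n ≤ (C + 1) * indexN L (n / k + 1) := by
        have h4 := one_le_indexN L (n / k + 1)
        nlinarith
      exact_mod_cast h3
    calc logb 2 (indexN M n) ≤ logb 2 (((C + 1) : ℝ) * (indexN L (n / k + 1) : ℝ)) :=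
          logb_le_logb_of_le one_lt_two (by linarith) hle
      _ = A + logb 2 (indexN L (n / k + 1)) := by
          rw [logb_mul (by positivity) (by linarith)]
  have htendsto : Tendsto (fun n : ℕ => n / k + 1) atTop atTop := by
    apply tendsto_atTop.mpr
    intro b
    filter_upwards [eventually_ge_atTop (b * k)] with n hn
    have : b ≤ n / k := (Nat.le_div_iff_mul_le hk).mpr hn
    omega
  refine le_of_forall_gt_imp_ge_of_dense fun c hc => ?_
  rcases eq_or_ne c ⊤ with rfl | hctop
  · exact le_top
  set r : ℝ := c.toReal with hr
  have hr0 : 0 ≤ r := ENNReal.toReal_nonneg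
  -- eventual linear bound on logb of indexN L
  have hev : ∀ᶠ n in atTop, logb 2 (indexN L n) ≤ r * n := by
    have h1 := eventually_lt_of_limsup_lt hc
    filter_upwards [h1, eventually_ge_atTop 1] with n hn hn1
    have hn0 : (0:ℝ) < (n:ℝ) := by exact_mod_cast hn1
    have hnonneg : (0:ℝ) ≤ logb 2 (indexN L n) / n := by
      apply div_nonneg _ hn0.le
      exact logb_nonneg one_lt_two (by exact_mod_cast one_le_indexN L n)
    have := (ENNReal.ofReal_lt_iff_lt_toReal hnonneg hctop).mp hn
    rw [div_lt_iff₀ hn0] at this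
    linarith [this]
  have hevM : ∀ᶠ n in atTop, logb 2 (indexN L (n / k + 1)) ≤ r * ((n / k : ℕ) + 1 : ℝ) := by
    have := htendsto.eventually hev
    filter_upwards [this] with n hn
    exact_mod_cast hn
  -- conclude via ε-argument
  apply ENNReal.le_of_forall_pos_le_add
  intro ε hε _
  have hsmall : ∀ᶠ n : ℕ in atTop, ((k : ℝ) * (A + r) / n : ℝ) < (ε : ℝ) := by
    exact (tendsto_const_div_atTop_nhds_zero_nat ((k : ℝ) * (A + r))).eventually_lt_const
      (by exact_mod_cast hε)
  have hev2 : ∀ᶠ n in atTop, (k : ENNReal) *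
      ENNReal.ofReal (logb 2 (indexN M n) / n) ≤ c + (ε : ENNReal) := by
    filter_upwards [hevM, hsmall, eventually_ge_atTop 1] with n hn hs hn1
    have hn0 : (0:ℝ) < (n:ℝ) := by exact_mod_cast hn1
    have hk0 : (0:ℝ) < (k:ℝ) := by exact_mod_cast hk
    have hdiv : ((n / k : ℕ) : ℝ) ≤ (n : ℝ) / (k : ℝ) := Nat.cast_div_le
    have hfield : (k:ℝ) * ((n:ℝ)/(k:ℝ)) = (n:ℝ) := by field_simp
    have h2 : logb 2 (indexN M n) ≤ A + r*((n:ℝ)/(k:ℝ)) + r := by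
      have hh := mul_le_mul_of_nonneg_left hdiv hr0
      nlinarith [hboundM n, hn]
    have h3 : r*((k:ℝ)*((n:ℝ)/(k:ℝ))) = r*(n:ℝ) := by rw [hfield]
    have h1 : (k:ℝ) * logb 2 (indexN M n) ≤ (k:ℝ)*(A+r) + r*(n:ℝ) := by
      nlinarith [mul_le_mul_of_nonneg_left h2 hk0.le, h3]
    have hreal : (k:ℝ) * (logb 2 (indexN M n) / n) ≤ (k:ℝ) * (A + r) / n + r := by
      rw [mul_div_assoc']
      calc (k:ℝ) * logb 2 (indexN M n) / n ≤ ((k:ℝ)*(A+r) + r*(n:ℝ)) / n := by gcongr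
        _ = (k:ℝ) * (A + r) / n + r := by
            field_simp
    calc (k : ENNReal) * ENNReal.ofReal (logb 2 (indexN M n) / n)
        = ENNReal.ofReal ((k:ℝ) * (logb 2 (indexN M n) / n)) := by
          rw [ENNReal.ofReal_mul (by positivity), ENNReal.ofReal_natCast]
      _ ≤ ENNReal.ofReal ((k:ℝ) * (A + r) / n + r) := ENNReal.ofReal_le_ofReal hreal
      _ = ENNReal.ofReal ((k:ℝ) * (A + r) / n) + ENNReal.ofReal r :=
          ENNReal.ofReal_add (by positivity) hr0
      _ ≤ (ε : ENNReal) + c := by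
          gcongr
          · calc ENNReal.ofReal ((k:ℝ) * (A + r) / n) ≤ ENNReal.ofReal (ε:ℝ) :=
                ENNReal.ofReal_le_ofReal hs.le
              _ = (ε : ENNReal) := ENNReal.ofReal_coe_nnreal
          · rw [hr, ENNReal.ofReal_toReal hctop]
      _ = c + (ε : ENNReal) := add_comm _ _
  calc (k : ENNReal) * entropy M
      = limsup (fun n : ℕ => (k : ENNReal) * ENNReal.ofReal (logb 2 (indexN M n) / n)) atTop :=
        (ENNReal.limsup_const_mul_of_ne_top (ENNReal.natCast_ne_top k)).symm
    _ ≤ c + (ε : ENNReal) := limsup_le_of_le (by isBoundedDefault) hev2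

end Aux

theorem entropy_encoding_same_length {α β : Type*} [Fintype α] [Fintype β]
    (enc : α → List β) (k : ℕ) (hk : 1 ≤ k)
    (hlen : ∀ a, (enc a).length = k) (hinj : Function.Injective enc)
    (L : Set (List α)) :
    entropy (encWord enc '' L) = entropy L / (k : ENNReal) := by
  have h1 := entropy_le_k_mul hlen hk hinj L
  have h2 := k_mul_entropy_le hlen hk hinj L
  have hk0 : (k : ENNReal) ≠ 0 := by exact_mod_cast Nat.one_le_iff_ne_zero.mp hk
  exact (ENNReal.eq_div_iff hk0 (ENNReal.natCast_ne_top k)).mpr (le_antisymm h2 h1)
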